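/- Let m, p ≥ 1, let X ⊆ ℝ^m be a closed set with 0 ∈ X, and let h : X → ℝ^p be continuous with h(0) = 0. Define N_h := {x ∈ X : for all y ∈ X with h(y) = h(x), ‖x‖ ≤ ‖y‖} (the set of points of minimal norm in their fibre). Then the image of h is well-defined as a germ at the origin — i.e., there exists ε₀ > 0 such that for all ε, ε' ∈ (0, ε₀) there exists δ > 0 with h(X ∩ B_ε) ∩ B_δ = h(X ∩ B_ε') ∩ B_δ — if and only if 0 is an isolated point of closure(N_h) ∩ h^{-1}(0), i.e., there exists r > 0 such that closure(N_h) ∩ {x ∈ X : h(x) = 0} ∩ B_r = {0}. -/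

import Mathlib

open Metric Filter Topology

/-- Criterion for a continuous map on a closed set to have a well-defined image
germ at the origin: the image of `h` is a well-defined germ at `0` if and only if
`0` is an isolated point of `closure (N_h) ∩ h⁻¹(0)`, where `N_h` is the set of
points of minimal norm in their fibre. -/
theorem stmt_10 (m p : ℕ) (hm : 1 ≤ m) (hp : 1 ≤ p)
    (X : Set (EuclideanSpace ℝ (Fin m))) (hX : IsClosed X)
    (h0X : (0 : EuclideanSpace ℝ (Fin m)) ∈ X)
    (h : EuclideanSpace ℝ (Fin m) → EuclideanSpace ℝ (Fin p))
    (hcont : ContinuousOn h X) (h0 : h 0 = 0) :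
    (∃ ε₀ > 0, ∀ ε ε', 0 < ε → ε < ε₀ → 0 < ε' → ε' < ε₀ → ∃ δ > 0,
        h '' (X ∩ ball 0 ε) ∩ ball (0 : EuclideanSpace ℝ (Fin p)) δ =
        h '' (X ∩ ball 0 ε') ∩ ball (0 : EuclideanSpace ℝ (Fin p)) δ) ↔
    (∃ r > 0,
      closure {x ∈ X | ∀ y ∈ X, h y = h x → ‖x‖ ≤ ‖y‖} ∩ {x ∈ X | h x = 0} ∩ ball 0 r
        = {0}) := by
  set N := {x ∈ X | ∀ y ∈ X, h y = h x → ‖x‖ ≤ ‖y‖} with hNdef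
  have hNX : N ⊆ X := fun x hx => hx.1
  constructor
  · rintro ⟨ε₀, hε₀, H⟩
    refine ⟨ε₀, hε₀, ?_⟩
    apply Set.eq_singleton_iff_unique_mem.2
    constructor
    · refine ⟨⟨subset_closure ⟨h0X, fun y _ _ => by simp⟩, ⟨h0X, h0⟩⟩, ?_⟩
      simpa using hε₀
    · rintro z ⟨⟨hzN, hzX, hz0⟩, hzr⟩
      by_contra hz
      have hznorm : 0 < ‖z‖ := norm_pos_iff.mpr hz
      have hzlt : ‖z‖ < ε₀ := mem_ball_zero_iff.mp hzr
      set ε := ‖z‖ / 2 with hεdef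
      set ε' := (‖z‖ + ε₀) / 2 with hε'def
      have hε : 0 < ε := by positivity
      have hεz : ε < ‖z‖ := by rw [hεdef]; linarith
      have hzε' : ‖z‖ < ε' := by rw [hε'def]; linarith
      have hε'lt : ε' < ε₀ := by rw [hε'def]; linarith
      obtain ⟨δ, hδ, heq⟩ := H ε ε' hε (by linarith) (by linarith) hε'lt
      -- eventually near z within X, ‖h w‖ < δ
      have htd : Tendsto h (𝓝[X] z) (𝓝 0) := hz0 ▸ hcont z hzX
      have hev1 : ∀ᶠ w in 𝓝 z, w ∈ X → h w ∈ ball (0 : EuclideanSpace ℝ (Fin p)) δ := by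
        have h' : ∀ᶠ w in 𝓝[X] z, h w ∈ ball (0 : EuclideanSpace ℝ (Fin p)) δ :=
          htd (ball_mem_nhds 0 hδ)
        exact eventually_nhdsWithin_iff.mp h'
      have hU : IsOpen {w : EuclideanSpace ℝ (Fin m) | ε < ‖w‖ ∧ ‖w‖ < ε'} :=
        (isOpen_lt continuous_const continuous_norm).inter
          (isOpen_lt continuous_norm continuous_const)
      have hev2 : ∀ᶠ w in 𝓝 z, ε < ‖w‖ ∧ ‖w‖ < ε' := hU.mem_nhds ⟨hεz, hzε'⟩
      have hfreq : ∃ᶠ w in 𝓝 z, w ∈ N := mem_closure_iff_frequently.mp hzN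
      obtain ⟨w, hwN, hwball, hwε, hwε'⟩ :=
        (hfreq.and_eventually (hev1.and hev2)).exists
      have hwX : w ∈ X := hwN.1
      have hmem : h w ∈ h '' (X ∩ ball 0 ε') ∩ ball (0 : EuclideanSpace ℝ (Fin p)) δ :=
        ⟨⟨w, ⟨hwX, mem_ball_zero_iff.mpr hwε'⟩, rfl⟩, hwball hwX⟩
      rw [← heq] at hmem
      obtain ⟨⟨y, ⟨hyX, hyball⟩, hyh⟩, -⟩ := hmem
      have := hwN.2 y hyX hyh
      have := mem_ball_zero_iff.mp hyball
      linarith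
  · rintro ⟨r, hr, hset⟩
    -- Key claim: for 0 < a ≤ b < r exists δ with the image inclusion
    have key : ∀ a b : ℝ, 0 < a → a ≤ b → b < r →
        ∃ δ > 0, h '' (X ∩ ball 0 b) ∩ ball (0 : EuclideanSpace ℝ (Fin p)) δ ⊆
          h '' (X ∩ ball 0 a) := by
      intro a b ha hab hbr
      by_contra hcontra
      push_neg at hcontra
      have hsel : ∀ n : ℕ, ∃ x, x ∈ X ∧ ‖x‖ < b ∧ ‖h x‖ < 1 / (n + 1) ∧
          h x ∉ h '' (X ∩ ball 0 a) := by
        intro n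
        obtain ⟨v, ⟨⟨x, ⟨hxX, hxb⟩, hvx⟩, hvδ⟩, hv⟩ :=
          Set.not_subset.mp (hcontra (1 / (n + 1)) (by positivity))
        exact ⟨x, hxX, mem_ball_zero_iff.mp hxb, by
          rw [← hvx] at hvδ; simpa [mem_ball_zero_iff] using hvδ, hvx ▸ hv⟩
      choose x hxX hxb hxδ hxnot using hsel
      -- minimal norm point in the fibre of x n
      have hmin : ∀ n : ℕ, ∃ z, z ∈ X ∧ h z = h (x n) ∧
          ∀ y ∈ X, h y = h (x n) → ‖z‖ ≤ ‖y‖ := by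
        intro n
        have hFclosed : IsClosed (X ∩ h ⁻¹' {h (x n)}) :=
          hcont.preimage_isClosed_of_isClosed hX isClosed_singleton
        obtain ⟨z, hzF, hzd⟩ := hFclosed.exists_infDist_eq_dist
          ⟨x n, hxX n, rfl⟩ 0
        refine ⟨z, hzF.1, hzF.2, fun y hyX hyh => ?_⟩
        have := infDist_le_dist_of_mem (s := X ∩ h ⁻¹' {h (x n)}) (x := 0)
          ⟨hyX, by simpa using hyh⟩
        rw [hzd] at this
        simpa [dist_zero_left] using this
      choose z hzX hzh hzmin using hmin
      have hzN : ∀ n, z n ∈ N := fun n =>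
        ⟨hzX n, fun y hyX hyh => hzmin n y hyX (by rw [hyh, hzh n])⟩
      have hzb : ∀ n, ‖z n‖ < b := fun n =>
        lt_of_le_of_lt (hzmin n (x n) (hxX n) rfl) (hxb n)
      have hza : ∀ n, a ≤ ‖z n‖ := by
        intro n
        by_contra hlt
        push_neg at hlt
        exact hxnot n ⟨z n, ⟨hzX n, mem_ball_zero_iff.mpr hlt⟩, hzh n⟩
      -- compactness: extract convergent subsequence
      have hball : ∀ n, z n ∈ closedBall (0 : EuclideanSpace ℝ (Fin m)) b :=
        fun n => mem_closedBall_zero_iff.mpr (hzb n).le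
      obtain ⟨w, hwb, φ, hφ, hφtd⟩ :=
        (isCompact_closedBall (0 : EuclideanSpace ℝ (Fin m)) b).tendsto_subseq hball
      have hwcl : w ∈ closure N :=
        mem_closure_of_tendsto hφtd (Eventually.of_forall fun n => hzN (φ n))
      have hwX : w ∈ X := hX.closure_subset_iff.mpr hNX hwcl
      -- h w = 0
      have htdX : Tendsto (fun n => z (φ n)) atTop (𝓝[X] w) :=
        tendsto_nhdsWithin_of_tendsto_nhds_of_eventually_within _ hφtd
          (Eventually.of_forall fun n => hzX (φ n))
      have htd1 : Tendsto (fun n => h (z (φ n))) atTop (𝓝 (h w)) :=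
        (hcont w hwX).tendsto.comp htdX
      have htd0 : Tendsto (fun n => h (z (φ n))) atTop (𝓝 0) := by
        apply squeeze_zero_norm (a := fun n : ℕ => 1 / (n + 1))
          (fun n => ?_) tendsto_one_div_add_atTop_nhds_zero_nat
        have h1 : ‖h (z (φ n))‖ < 1 / (φ n + 1) := by rw [hzh (φ n)]; exact hxδ (φ n)
        have h2 : (1 : ℝ) / (φ n + 1) ≤ 1 / (n + 1) := by
          apply one_div_le_one_div_of_le (by positivity)
          have := hφ.le_apply (x := n)
          push_cast
          exact_mod_cast Nat.add_le_add_right this 1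
        linarith
      have hw0 : h w = 0 := tendsto_nhds_unique htd1 htd0
      -- a ≤ ‖w‖
      have hwa : a ≤ ‖w‖ :=
        ge_of_tendsto (hφtd.norm) (Eventually.of_forall fun n => hza (φ n))
      have hwr : w ∈ ball (0 : EuclideanSpace ℝ (Fin m)) r :=
        mem_ball_zero_iff.mpr (lt_of_le_of_lt (mem_closedBall_zero_iff.mp hwb) hbr)
      have : w ∈ ({0} : Set (EuclideanSpace ℝ (Fin m))) := by
        rw [← hset]; exact ⟨⟨hwcl, ⟨hwX, hw0⟩⟩, hwr⟩
      rw [Set.mem_singleton_iff] at this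
      rw [this, norm_zero] at hwa
      linarith
    refine ⟨r, hr, fun ε ε' hε hεr hε' hε'r => ?_⟩
    rcases le_total ε ε' with hle | hle
    · obtain ⟨δ, hδ, hsub⟩ := key ε ε' hε hle hε'r
      refine ⟨δ, hδ, Set.Subset.antisymm ?_ ?_⟩
      · exact Set.inter_subset_inter_left _
          (Set.image_mono (Set.inter_subset_inter_right _ (ball_subset_ball hle)))
      · exact fun v hv => ⟨hsub hv, hv.2⟩
    · obtain ⟨δ, hδ, hsub⟩ := key ε' ε hε' hle hεr
      refine ⟨δ, hδ, Set.Subset.antisymm ?_ ?_⟩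
      · exact fun v hv => ⟨hsub hv, hv.2⟩
      · exact Set.inter_subset_inter_left _
          (Set.image_mono (Set.inter_subset_inter_right _ (ball_subset_ball hle)))
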